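/- Let G be a finite graph, let μ₁, …, μ_k be pairwise disjoint modules of G partitioning V(G), and let Q be the quotient graph on {1,…,k} where i ~ j iff some vertex of μ_i is adjacent to some vertex of μ_j. If Q admits a transitive orientation O_Q and each induced subgraph G[μ_i] admits a transitive orientation O_i, then G admits a transitive orientation: orient edges inside each μ_i by O_i, and orient each edge between μ_i and μ_j (i ≠ j) from μ_i to μ_j iff (i,j) ∈ O_Q. -/
import Mathlib


/-- A module of a simple graph: a nonempty vertex set such that every vertex
outside is adjacent to all of it or to none of it. -/
def IsModule {V : Type*} (G : SimpleGraph V) (M : Set V) : Prop :=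
  M.Nonempty ∧ ∀ u ∉ M, (∀ v ∈ M, G.Adj u v) ∨ (∀ v ∈ M, ¬ G.Adj u v)

/-- A transitive orientation of a simple graph: each edge gets exactly one
direction, and the resulting relation is transitive. -/
def IsTransOrientation {V : Type*} (G : SimpleGraph V) (O : V → V → Prop) : Prop :=
  (∀ u v, O u v → G.Adj u v) ∧
  (∀ u v, G.Adj u v → (O u v ↔ ¬ O v u)) ∧
  (∀ u v w, O u v → O v w → O u w)

/-- A transitive orientation of the subgraph of `G` induced on a vertex set `S`. -/
def IsTransOrientationOn {V : Type*} (G : SimpleGraph V) (S : Set V)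
    (O : V → V → Prop) : Prop :=
  (∀ u v, O u v → u ∈ S ∧ v ∈ S ∧ G.Adj u v) ∧
  (∀ u v, u ∈ S → v ∈ S → G.Adj u v → (O u v ↔ ¬ O v u)) ∧
  (∀ u v w, O u v → O v w → O u w)

/-- The quotient graph of a partition of the vertex set into modules. -/
def quotGraph {V : Type*} {k : ℕ} (G : SimpleGraph V) (μ : Fin k → Set V) :
    SimpleGraph (Fin k) :=
  SimpleGraph.fromRel (fun i j => ∃ u ∈ μ i, ∃ v ∈ μ j, G.Adj u v)

theorem transOrientation_from_quotient {V : Type*} [Fintype V] {k : ℕ}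
    (G : SimpleGraph V) (μ : Fin k → Set V)
    (hmod : ∀ i, IsModule G (μ i))
    (hdisj : ∀ i j, i ≠ j → Disjoint (μ i) (μ j))
    (hcov : ∀ v : V, ∃ i, v ∈ μ i)
    (OQ : Fin k → Fin k → Prop) (hOQ : IsTransOrientation (quotGraph G μ) OQ)
    (Oin : Fin k → V → V → Prop)
    (hOin : ∀ i, IsTransOrientationOn G (μ i) (Oin i)) :
    IsTransOrientation G
      (fun u v => (∃ i, u ∈ μ i ∧ v ∈ μ i ∧ Oin i u v) ∨
                  (∃ i j, u ∈ μ i ∧ v ∈ μ j ∧ OQ i j)) := by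
  -- uniqueness of index
  have huniq : ∀ {i j : Fin k} {v : V}, v ∈ μ i → v ∈ μ j → i = j := by
    intro i j v hi hj
    by_contra h
    exact (hdisj i j h).ne_of_mem hi hj rfl
  -- cross adjacency: if quotient adjacent, all pairs are adjacent
  have hcross : ∀ {i j : Fin k}, (quotGraph G μ).Adj i j →
      ∀ u ∈ μ i, ∀ v ∈ μ j, G.Adj u v := by
    intro i j hadj u hu v hv
    obtain ⟨hne, hrel⟩ := hadj
    -- get some adjacent pair u' ∈ μ i, v' ∈ μ j
    obtain ⟨u', hu', v', hv', hA⟩ :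
        ∃ u' ∈ μ i, ∃ v' ∈ μ j, G.Adj u' v' := by
      rcases hrel with ⟨a, ha, b, hb, h⟩ | ⟨a, ha, b, hb, h⟩
      · exact ⟨a, ha, b, hb, h⟩
      · exact ⟨b, hb, a, ha, h.symm⟩
    -- u' ∉ μ j since i ≠ j
    have hu'nj : u' ∉ μ j := fun h => hne (huniq hu' h)
    have h1 : ∀ w ∈ μ j, G.Adj u' w := by
      rcases (hmod j).2 u' hu'nj with h | h
      · exact h
      · exact absurd hA (h v' hv')
    have hvu' : G.Adj v u' := (h1 v hv).symm
    have hvni : v ∉ μ i := fun h => hne (huniq h hv)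
    rcases (hmod i).2 v hvni with h | h
    · exact (h u hu).symm
    · exact absurd hvu' (h u' hu')
  -- OQ implies quotient adjacency
  have hOQadj := hOQ.1
  refine ⟨?_, ?_, ?_⟩
  · rintro u v (⟨i, hu, hv, h⟩ | ⟨i, j, hu, hv, h⟩)
    · exact ((hOin i).1 u v h).2.2
    · exact hcross (hOQadj i j h) u hu v hv
  · intro u v hadj
    obtain ⟨i, hu⟩ := hcov u
    obtain ⟨j, hv⟩ := hcov v
    by_cases hij : i = j
    · subst hij
      have hiff := (hOin i).2.1 u v hu hv hadj
      constructor
      · rintro (⟨m, hu', hv', h⟩ | ⟨m, n, hu', hv', h⟩)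
        · rintro (⟨m', hv'', hu'', h'⟩ | ⟨m', n', hv'', hu'', h'⟩)
          · have hm : m = i := huniq hu' hu
            have hm' : m' = i := huniq hu'' hu
            subst hm; subst hm'
            exact (hiff.mp h) h'
          · have hm' : m' = i := huniq hv'' hv
            have hn' : n' = i := huniq hu'' hu
            exact (hOQadj m' n' h').ne (hm'.trans hn'.symm)
        · have hm : m = i := huniq hu' hu
          have hn : n = i := huniq hv' hv
          exact ((hOQadj m n h).ne (hm.trans hn.symm)).elim
      · intro hnvu
        left
        refine ⟨i, hu, hv, ?_⟩
        rw [hiff]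
        intro h'
        exact hnvu (Or.inl ⟨i, hv, hu, h'⟩)
    · -- cross case
      have hQ : (quotGraph G μ).Adj i j := by
        refine ⟨hij, Or.inl ⟨u, hu, v, hv, hadj⟩⟩
      have hiff := hOQ.2.1 i j hQ
      constructor
      · rintro (⟨m, hu', hv', h⟩ | ⟨m, n, hu', hv', h⟩)
        · exact (hij ((huniq hu hu').trans (huniq hv' hv))).elim
        · have hm : m = i := huniq hu' hu
          have hn : n = j := huniq hv' hv
          rw [hm, hn] at h
          rintro (⟨p, hv'', hu'', h'⟩ | ⟨p, q, hv'', hu'', h'⟩)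
          · exact hij ((huniq hu hu'').trans (huniq hv'' hv))
          · have hp : p = j := huniq hv'' hv
            have hq : q = i := huniq hu'' hu
            rw [hp, hq] at h'
            exact (hiff.mp h) h'
      · intro hnvu
        right
        refine ⟨i, j, hu, hv, ?_⟩
        rw [hiff]
        intro h'
        exact hnvu (Or.inr ⟨j, i, hv, hu, h'⟩)
  · rintro u v w (⟨i, hu, hv, h⟩ | ⟨i, j, hu, hv, h⟩)
      <;> rintro (⟨i', hv', hw', h'⟩ | ⟨i', j', hv', hw', h'⟩)
    · have : i = i' := huniq hv hv'
      subst this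
      exact Or.inl ⟨i, hu, hw', (hOin i).2.2 u v w h h'⟩
    · have : i = i' := huniq hv hv'
      subst this
      exact Or.inr ⟨i, j', hu, hw', h'⟩
    · have : j = i' := huniq hv hv'
      subst this
      exact Or.inr ⟨i, j, hu, hw', h⟩
    · have : j = i' := huniq hv hv'
      subst this
      exact Or.inr ⟨i, j', hu, hw', hOQ.2.2 i j j' h h'⟩
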